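/- Let U be a unitary operator on a complex Hilbert space H such that 1 + U is Fredholm, and let W ⊆ H be a closed finite-codimensional subspace with Ker(1+U) ∩ W = {0}. Write U = [[X,Y],[Z,T]] in block form relative to H = W ⊕ W⊥. Then 1 + X : W → W is invertible, and the operator ℛ(U) := T − Z(1+X)⁻¹Y on W⊥ is unitary. Moreover Ker(1 + ℛ(U)) = P_{W⊥}(Ker(1+U)), and in particular dim Ker(1 + ℛ(U)) = dim Ker(1+U). -/

import Mathlib

noncomputable section

variable (H : Type) [NormedAddCommGroup H] [InnerProductSpace ℂ H] [CompleteSpace H]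

/-- A bounded operator `T` on `H` is Fredholm: finite-dimensional kernel,
finite-dimensional cokernel, and closed range. -/
def IsFredholmOp (T : H →L[ℂ] H) : Prop :=
  FiniteDimensional ℂ ↥(LinearMap.ker (T : H →ₗ[ℂ] H)) ∧
  FiniteDimensional ℂ (H ⧸ LinearMap.range (T : H →ₗ[ℂ] H)) ∧
  IsClosed ((LinearMap.range (T : H →ₗ[ℂ] H) : Submodule ℂ H) : Set H)


section Aux
open scoped InnerProductSpace ComplexConjugate
set_option linter.unusedSectionVars false
variable {H}

lemma sup_closed_of_fd {E : Type*} [NormedAddCommGroup E] [NormedSpace ℂ E]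
    (V F : Submodule ℂ E) (hV : IsClosed (V : Set E)) [FiniteDimensional ℂ ↥F] :
    IsClosed ((V ⊔ F : Submodule ℂ E) : Set E) := by
  haveI : IsClosed (V : Set E) := hV
  have hclosed : IsClosed ((Submodule.map V.mkQ F : Submodule ℂ (E ⧸ V)) : Set (E ⧸ V)) :=
    haveI : FiniteDimensional ℂ ↥(Submodule.map V.mkQ F) := Module.Finite.map F V.mkQ
    Submodule.closed_of_finiteDimensional _
  have hset : ((V ⊔ F : Submodule ℂ E) : Set E) = V.mkQ ⁻¹' (Submodule.map V.mkQ F) := by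
    have : Submodule.comap V.mkQ (Submodule.map V.mkQ F) = V ⊔ F := by
      rw [Submodule.comap_map_eq, Submodule.ker_mkQ, sup_comm]
    rw [← this]; rfl
  rw [hset]
  exact hclosed.preimage continuous_quot_mk

-- A = 1 + U is bounded below on W
lemma bdd_below_on_W (U : H →L[ℂ] H)
    (hKfd : FiniteDimensional ℂ ↥(LinearMap.ker ((1 + U : H →L[ℂ] H) : H →ₗ[ℂ] H)))
    (hRc : IsClosed ((LinearMap.range ((1 + U : H →L[ℂ] H) : H →ₗ[ℂ] H) : Submodule ℂ H) : Set H))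
    (W : Submodule ℂ H) (hWc : IsClosed (W : Set H))
    (hclean : LinearMap.ker ((1 + U : H →L[ℂ] H) : H →ₗ[ℂ] H) ⊓ W = ⊥) :
    ∃ c : NNReal, ∀ x : ↥W, ‖x‖ ≤ c * ‖(1 + U) (x : H)‖ := by
  set A : H →L[ℂ] H := 1 + U with hA
  set K : Submodule ℂ H := LinearMap.ker ((A : H →L[ℂ] H) : H →ₗ[ℂ] H) with hK
  set Ra : Submodule ℂ H := LinearMap.range ((A : H →L[ℂ] H) : H →ₗ[ℂ] H) with hRa
  haveI : CompleteSpace ↥K := FiniteDimensional.complete ℂ ↥K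
  haveI : CompleteSpace ↥Ra := hRc.completeSpace_coe
  haveI : CompleteSpace ↥W := hWc.completeSpace_coe
  have hAk : ∀ y ∈ K, A y = 0 := fun y hy => hy
  -- step (i) : A bounded below on Kᗮ
  have hmem1 : ∀ x : ↥(Kᗮ), A (x : H) ∈ Ra := fun x => ⟨(x : H), rfl⟩
  set B' : ↥(Kᗮ) →L[ℂ] ↥Ra := (A ∘L (Kᗮ).subtypeL).codRestrict Ra (fun x => hmem1 x) with hB'
  have hkerB : B'.ker = ⊥ := by
    rw [Submodule.eq_bot_iff]
    rintro x hx
    have hx0 : A (x : H) = 0 := by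
      have := congrArg (Subtype.val) (LinearMap.mem_ker.mp hx)
      exact this
    have hxK : (x : H) ∈ K := hx0
    have : (x : H) = 0 := by
      have h2 := x.2
      rw [Submodule.mem_orthogonal] at h2
      exact inner_self_eq_zero.mp (h2 _ hxK)
    exact Subtype.ext this
  have hrangeB : B'.range = ⊤ := by
    rw [LinearMap.range_eq_top]
    rintro ⟨y, z, rfl⟩
    refine ⟨⟨z - (Submodule.orthogonalProjectionOnto K z : H), Submodule.sub_starProjection_mem_orthogonal z⟩, ?_⟩
    apply Subtype.ext
    have : A ((Submodule.orthogonalProjectionOnto K z : H)) = 0 := hAk _ (Submodule.orthogonalProjectionOnto K z).2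
    simp only [hB', ContinuousLinearMap.coe_codRestrict_apply, ContinuousLinearMap.comp_apply,
      Submodule.coe_subtypeL, Submodule.subtype_apply, Submodule.subtypeL_apply, map_sub, this,
      sub_zero, ContinuousLinearMap.coe_coe]
    show A (z - ↑(K.orthogonalProjectionOnto z)) = A z
    rw [map_sub, this, sub_zero]
  set e1 := ContinuousLinearEquiv.ofBijective B' hkerB hrangeB with he1
  set c1 : NNReal := ‖(e1.symm : ↥Ra →L[ℂ] ↥(Kᗮ))‖₊ with hc1
  have bound1 : ∀ x : ↥(Kᗮ), ‖x‖ ≤ (c1 : ℝ) * ‖A (x : H)‖ := by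
    intro x
    have h1 : ‖x‖ = ‖e1.symm (e1 x)‖ := by rw [e1.symm_apply_apply]
    have h2 : ‖e1.symm (e1 x)‖ ≤ (c1 : ℝ) * ‖e1 x‖ :=
      (e1.symm : ↥Ra →L[ℂ] ↥(Kᗮ)).le_opNorm (e1 x)
    have h3 : ‖e1 x‖ = ‖A (x : H)‖ := by
      rw [ContinuousLinearEquiv.coeFn_ofBijective]
      rfl
    rw [h1, ← h3]; exact h2
  -- step (ii) : the pair map
  set S : Submodule ℂ H := W ⊔ K with hS
  haveI : CompleteSpace ↥S := by
    have := sup_closed_of_fd W K hWc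
    exact this.completeSpace_coe
  set ψ : ↥K × ↥W →L[ℂ] H := K.subtypeL.coprod W.subtypeL with hψ
  have hmem2 : ∀ p : ↥K × ↥W, ψ p ∈ S := by
    rintro ⟨k, w⟩
    exact Submodule.add_mem _ (Submodule.mem_sup_right k.2) (Submodule.mem_sup_left w.2)
  set ψ' : ↥K × ↥W →L[ℂ] ↥S := ψ.codRestrict S hmem2 with hψ'
  have hkerψ : ψ'.ker = ⊥ := by
    rw [Submodule.eq_bot_iff]
    rintro ⟨k, w⟩ hx
    have hx0 : (k : H) + (w : H) = 0 := by
      have := congrArg (Subtype.val) (LinearMap.mem_ker.mp hx)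
      simpa [hψ', hψ] using this
    have hkneg : (k : H) = -(w : H) := eq_neg_of_add_eq_zero_left hx0
    have hkKW : (k : H) ∈ K ⊓ W := ⟨k.2, by rw [hkneg]; exact neg_mem w.2⟩
    have hk0 : (k : H) = 0 := by
      rw [hclean] at hkKW
      exact hkKW
    have hw0 : (w : H) = 0 := by
      rw [hk0, zero_add] at hx0; exact hx0
    exact Prod.ext (Subtype.ext hk0) (Subtype.ext hw0)
  have hrangeψ : ψ'.range = ⊤ := by
    rw [LinearMap.range_eq_top]
    intro y
    obtain ⟨a, ha, b, hb, hab⟩ := Submodule.mem_sup.mp y.2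
    refine ⟨(⟨b, hb⟩, ⟨a, ha⟩), ?_⟩
    apply Subtype.ext
    simp only [hψ', hψ, ContinuousLinearMap.coe_codRestrict_apply,
      ContinuousLinearMap.coprod_apply, Submodule.coe_subtypeL, Submodule.subtype_apply]
    show b + a = (y : H)
    rw [add_comm]; exact hab
  set e2 := ContinuousLinearEquiv.ofBijective ψ' hkerψ hrangeψ with he2
  set c2 : NNReal := ‖(e2.symm : ↥S →L[ℂ] ↥K × ↥W)‖₊ with hc2
  have bound2 : ∀ p : ↥K × ↥W, ‖p‖ ≤ (c2 : ℝ) * ‖(p.1 : H) + (p.2 : H)‖ := by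
    intro p
    have h1 : ‖p‖ = ‖e2.symm (e2 p)‖ := by rw [e2.symm_apply_apply]
    have h2 : ‖e2.symm (e2 p)‖ ≤ (c2 : ℝ) * ‖e2 p‖ :=
      (e2.symm : ↥S →L[ℂ] ↥K × ↥W).le_opNorm (e2 p)
    have h3 : ‖e2 p‖ = ‖(p.1 : H) + (p.2 : H)‖ := by
      rw [ContinuousLinearEquiv.coeFn_ofBijective]
      rfl
    rw [h1, ← h3]; exact h2
  refine ⟨c2 * c1, fun x => ?_⟩
  set k := Submodule.orthogonalProjectionOnto K (x : H) with hk
  set y : H := (x : H) - (k : H) with hy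
  have hyK : y ∈ Kᗮ := Submodule.sub_starProjection_mem_orthogonal (x : H)
  have h5 : ‖x‖ ≤ (c2 : ℝ) * ‖y‖ := by
    have hp := bound2 (-k, x)
    have hfst : ((-k : ↥K) : H) + (x : H) = y := by
      rw [hy]; push_cast; abel
    rw [hfst] at hp
    exact le_trans (norm_snd_le ((-k, x) : ↥K × ↥W)) hp
  have h6 : ‖y‖ ≤ (c1 : ℝ) * ‖A y‖ := bound1 ⟨y, hyK⟩
  have hAy : A y = A (x : H) := by
    rw [hy, map_sub, hAk _ k.2, sub_zero]
  rw [hAy] at h6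
  calc ‖x‖ ≤ (c2 : ℝ) * ‖y‖ := h5
    _ ≤ (c2 : ℝ) * ((c1 : ℝ) * ‖A (x : H)‖) :=
        mul_le_mul_of_nonneg_left h6 c2.coe_nonneg
    _ = ((c2 * c1 : NNReal) : ℝ) * ‖A (x : H)‖ := by push_cast; ring
lemma inj_aux (V : H →L[ℂ] H) (hVn : ∀ x : H, ‖V x‖ = ‖x‖)
    (W : Submodule ℂ H) [Submodule.HasOrthogonalProjection W]
    (hcl : ∀ x : H, x + V x = 0 → x ∈ W → x = 0)
    (w : ↥W) (h : Submodule.orthogonalProjectionOnto W ((w : H) + V w) = 0) : w = 0 := by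
  by_cases hw : (w : H) = 0
  · exact Subtype.ext hw
  have hmem : ((w : H) + V w) ∈ Wᗮ := (Submodule.orthogonalProjectionOnto_eq_zero_iff).mp h
  have h0 : ⟪(w : H), (w : H) + V w⟫_ℂ = 0 := (Submodule.mem_orthogonal W _).mp hmem _ w.2
  rw [inner_add_right] at h0
  have key : ⟪(w : H), -(V w)⟫_ℂ = (‖(w : H)‖ : ℂ) * ‖-(V (w : H))‖ := by
    rw [inner_neg_right, norm_neg, hVn]
    have : ⟪(w : H), V w⟫_ℂ = -⟪(w : H), (w : H)⟫_ℂ := by linear_combination h0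
    rw [this, neg_neg, inner_self_eq_norm_sq_to_K (𝕜 := ℂ)]
    rw [sq]; norm_cast
  have heq := (inner_eq_norm_mul_iff (𝕜 := ℂ)).mp key
  rw [norm_neg, hVn] at heq
  -- heq : ‖w‖ • w = ‖w‖ • (-(V w))
  have hnorm : ‖(w : H)‖ ≠ 0 := norm_ne_zero_iff.mpr hw
  have : (w : H) = -(V (w : H)) := smul_right_injective H hnorm heq
  have h2 : (w : H) + V (w : H) = 0 := by nth_rewrite 1 [this]; simp
  exact absurd (hcl _ h2 w.2) hw
lemma norm_coe_add_sq (W : Submodule ℂ H) (a : ↥W) (b : ↥(Wᗮ)) :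
    ‖(a : H) + (b : H)‖ ^ 2 = ‖a‖ ^ 2 + ‖b‖ ^ 2 := by
  have hi : ⟪(a : H), (b : H)⟫_ℂ = 0 := (Submodule.mem_orthogonal W (b : H)).mp b.2 a a.2
  rw [@norm_add_sq ℂ _ _ _ _ (a : H) (b : H), hi]
  simp

lemma reduction_norm_map (V : H →L[ℂ] H) (hVn : ∀ x : H, ‖V x‖ = ‖x‖)
    (W : Submodule ℂ H) [Submodule.HasOrthogonalProjection W]
    (Ninv : ↥W →L[ℂ] ↥W)
    (h2 : ((1 : ↥W →L[ℂ] ↥W) + (Submodule.orthogonalProjectionOnto W ∘L V ∘L W.subtypeL)) ∘L Ninv = 1)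
    (v : ↥(Wᗮ)) :
    ‖(Submodule.orthogonalProjectionOnto (Wᗮ) ∘L V ∘L (Wᗮ).subtypeL -
        (Submodule.orthogonalProjectionOnto (Wᗮ) ∘L V ∘L W.subtypeL) ∘L Ninv ∘L
          (Submodule.orthogonalProjectionOnto W ∘L V ∘L (Wᗮ).subtypeL)) v‖ = ‖v‖ := by
  set P := Submodule.orthogonalProjectionOnto W with hP
  set Q := Submodule.orthogonalProjectionOnto (Wᗮ) with hQ
  set X : ↥W →L[ℂ] ↥W := P ∘L V ∘L W.subtypeL with hX
  set Y : ↥(Wᗮ) →L[ℂ] ↥W := P ∘L V ∘L (Wᗮ).subtypeL with hY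
  set Z : ↥W →L[ℂ] ↥(Wᗮ) := Q ∘L V ∘L W.subtypeL with hZ
  set T : ↥(Wᗮ) →L[ℂ] ↥(Wᗮ) := Q ∘L V ∘L (Wᗮ).subtypeL with hT
  set w : ↥W := -(Ninv (Y v)) with hw
  have hthis : Ninv (Y v) + X (Ninv (Y v)) = Y v := by
    have := congrArg (fun (f : ↥W →L[ℂ] ↥W) => f (Y v)) h2
    simpa [ContinuousLinearMap.comp_apply, ContinuousLinearMap.add_apply] using this
  have hkey1 : X w + Y v = -w := by
    rw [hw, map_neg, neg_neg]
    have h3 : X (Ninv (Y v)) = Y v - Ninv (Y v) := eq_sub_of_add_eq' hthis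
    rw [h3]; abel
  set R : ↥(Wᗮ) →L[ℂ] ↥(Wᗮ) := T - Z ∘L Ninv ∘L Y with hR
  have hkey2 : Z w + T v = R v := by
    rw [hR, hw]
    simp only [ContinuousLinearMap.sub_apply, ContinuousLinearMap.comp_apply, map_neg]
    abel
  set x : H := (w : H) + (v : H) with hx
  have hdecV : ((P (V x) : H)) + ((Q (V x) : H)) = V x :=
    Submodule.starProjection_add_starProjection_orthogonal (K := W) (V x)
  have hPVx : P (V x) = X w + Y v := by
    rw [hx, map_add, map_add, hX, hY]
    simp [ContinuousLinearMap.comp_apply]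
  have hQVx : Q (V x) = Z w + T v := by
    rw [hx, map_add, map_add, hZ, hT]
    simp [ContinuousLinearMap.comp_apply]
  have hVx : V x = ((-w : ↥W) : H) + ((R v : ↥(Wᗮ)) : H) := by
    rw [← hdecV, hPVx, hQVx, hkey1, hkey2]
  have hnx : ‖x‖ ^ 2 = ‖w‖ ^ 2 + ‖v‖ ^ 2 := norm_coe_add_sq W w v
  have hnVx : ‖V x‖ ^ 2 = ‖w‖ ^ 2 + ‖R v‖ ^ 2 := by
    rw [hVx, norm_coe_add_sq W (-w) (R v), norm_neg]
  have hVnx : ‖V x‖ = ‖x‖ := hVn x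
  have hsq : ‖R v‖ ^ 2 = ‖v‖ ^ 2 := by
    have h' : ‖w‖ ^ 2 + ‖R v‖ ^ 2 = ‖w‖ ^ 2 + ‖v‖ ^ 2 := by
      rw [← hnVx, hVnx, hnx]
    exact add_left_cancel h'
  have : ‖R v‖ = ‖v‖ := (sq_eq_sq₀ (norm_nonneg _) (norm_nonneg _)).mp hsq
  exact this

lemma isUnit_one_add_X (U : H →L[ℂ] H) (hU : U ∈ unitary (H →L[ℂ] H))
    (hKfd : FiniteDimensional ℂ ↥(LinearMap.ker ((1 + U : H →L[ℂ] H) : H →ₗ[ℂ] H)))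
    (hRc : IsClosed ((LinearMap.range ((1 + U : H →L[ℂ] H) : H →ₗ[ℂ] H) : Submodule ℂ H) : Set H))
    (W : Submodule ℂ H) (hWc : IsClosed (W : Set H)) [Submodule.HasOrthogonalProjection W]
    [FiniteDimensional ℂ ↥(Wᗮ)]
    (hclean : LinearMap.ker ((1 + U : H →L[ℂ] H) : H →ₗ[ℂ] H) ⊓ W = ⊥) :
    ((1 : ↥W →L[ℂ] ↥W) + (Submodule.orthogonalProjectionOnto W ∘L U ∘L W.subtypeL)).ker = ⊥ ∧
    ((1 : ↥W →L[ℂ] ↥W) + (Submodule.orthogonalProjectionOnto W ∘L U ∘L W.subtypeL)).range = ⊤ := by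
  haveI : CompleteSpace ↥W := hWc.completeSpace_coe
  set X : ↥W →L[ℂ] ↥W := Submodule.orthogonalProjectionOnto W ∘L U ∘L W.subtypeL with hX
  have hUn : ∀ x : H, ‖U x‖ = ‖x‖ := fun x =>
    ContinuousLinearMap.norm_map_of_mem_unitary hU x
  have hUsn : ∀ x : H, ‖(star U) x‖ = ‖x‖ := fun x =>
    ContinuousLinearMap.norm_map_of_mem_unitary (Unitary.star_mem hU) x
  have hclU : ∀ x : H, x + U x = 0 → x ∈ W → x = 0 := by
    intro x hx hxW
    have hxk : x ∈ LinearMap.ker ((1 + U : H →L[ℂ] H) : H →ₗ[ℂ] H) := by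
      simpa [ContinuousLinearMap.add_apply] using hx
    have : x ∈ (⊥ : Submodule ℂ H) := hclean ▸ Submodule.mem_inf.mpr ⟨hxk, hxW⟩
    simpa using this
  have hclUs : ∀ x : H, x + (star U) x = 0 → x ∈ W → x = 0 := by
    intro x hx hxW
    have h1 : U (x + (star U) x) = 0 := by rw [hx]; simp
    have h2 : U ((star U) x) = x := by
      have := congrArg (fun (f : H →L[ℂ] H) => f x) (Unitary.mul_star_self_of_mem hU)
      simpa using this
    rw [map_add, h2] at h1
    rw [add_comm] at h1
    exact hclU x h1 hxW
  have happly : ∀ w : ↥W, (((1 + X) w : ↥W) : H)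
      = (w : H) + ((Submodule.orthogonalProjectionOnto W (U (w : H)) : ↥W) : H) := by
    intro w
    simp [hX, ContinuousLinearMap.add_apply, ContinuousLinearMap.comp_apply]
  constructor
  · rw [Submodule.eq_bot_iff]
    intro w hw
    have h1 : ((w : H) + ((Submodule.orthogonalProjectionOnto W (U (w : H)) : ↥W) : H)) = 0 := by
      rw [← happly w]; exact congrArg Subtype.val (LinearMap.mem_ker.mp hw)
    have hw0 : Submodule.orthogonalProjectionOnto W ((w : H) + U (w : H)) = 0 := by
      apply Subtype.ext
      rw [map_add, Submodule.orthogonalProjectionOnto_mem_subspace_eq_self]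
      push_cast
      rw [h1]
    exact inj_aux U hUn W hclU w hw0
  · -- range
    obtain ⟨c, hc⟩ := bdd_below_on_W U hKfd hRc W hWc hclean
    set g : ↥W →L[ℂ] H := (1 + U) ∘L W.subtypeL with hg
    have hbound : ∀ x : ↥W, ‖x‖ ≤ c * ‖g x‖ := fun x => hc x
    have hanti : AntilipschitzWith c g := AddMonoidHomClass.antilipschitz_of_bound g hbound
    have hgr : IsClosed (Set.range g) := hanti.isClosed_range g.uniformContinuous
    set N : Submodule ℂ H := Submodule.map ((1 + U : H →L[ℂ] H) : H →ₗ[ℂ] H) W with hN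
    have hmapset : (N : Set H) = Set.range g := by
      ext z
      constructor
      · rintro ⟨w, hw, rfl⟩
        exact ⟨⟨w, hw⟩, rfl⟩
      · rintro ⟨x, rfl⟩
        exact ⟨(x : H), x.2, rfl⟩
    have hNc : IsClosed (N : Set H) := by rw [hmapset]; exact hgr
    have hJc : IsClosed ((N ⊔ Wᗮ : Submodule ℂ H) : Set H) := sup_closed_of_fd N (Wᗮ) hNc
    have hrangeset : ((((1 : ↥W →L[ℂ] ↥W) + X).range : Submodule ℂ ↥W) : Set ↥W) =
        Subtype.val ⁻¹' ((N ⊔ Wᗮ : Submodule ℂ H) : Set H) := by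
      ext ξ
      simp only [SetLike.mem_coe, Set.mem_preimage]
      constructor
      · rintro ⟨w, rfl⟩
        have hUw : U (w : H) = ((Submodule.orthogonalProjectionOnto W (U (w : H)) : ↥W) : H)
            + ((Submodule.orthogonalProjectionOnto (Wᗮ) (U (w : H)) : ↥(Wᗮ)) : H) :=
          (Submodule.starProjection_add_starProjection_orthogonal (K := W) (U (w : H))).symm
        refine Submodule.mem_sup.mpr ⟨(1 + U) (w : H), ⟨(w : H), w.2, rfl⟩,
          -((Submodule.orthogonalProjectionOnto (Wᗮ) (U (w : H)) : ↥(Wᗮ)) : H),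
          neg_mem (Submodule.orthogonalProjectionOnto (Wᗮ) (U (w : H))).2, ?_⟩
        rw [ContinuousLinearMap.coe_coe, happly w]
        have h1 : (1 + U) (w : H) = (w : H) + U (w : H) := by
          simp [ContinuousLinearMap.add_apply]
        rw [h1]
        nth_rewrite 1 [hUw]
        abel
      · intro hξ
        obtain ⟨a, ha, b, hb, hab⟩ := Submodule.mem_sup.mp hξ
        obtain ⟨w₀, hw₀, rfl⟩ := ha
        refine ⟨⟨w₀, hw₀⟩, ?_⟩
        have h1 : Submodule.orthogonalProjectionOnto W (ξ : H) = ξ :=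
          Submodule.orthogonalProjectionOnto_mem_subspace_eq_self ξ
        have h2 : Submodule.orthogonalProjectionOnto W (ξ : H) = Submodule.orthogonalProjectionOnto W (w₀ + U w₀) := by
          rw [← hab]
          have hb0 : Submodule.orthogonalProjectionOnto W b = 0 :=
            Submodule.orthogonalProjectionOnto_apply_of_mem_orthogonal hb
          have h3 : ((1 + U : H →L[ℂ] H) : H →ₗ[ℂ] H) w₀ = w₀ + U w₀ := by
            simp [ContinuousLinearMap.add_apply]
          rw [map_add, hb0, add_zero, h3]
        apply Subtype.ext
        rw [ContinuousLinearMap.coe_coe, happly ⟨w₀, hw₀⟩]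
        have h4 : ξ = Submodule.orthogonalProjectionOnto W (w₀ + U w₀) := h1.symm.trans h2
        rw [h4, map_add]
        push_cast
        rw [show ((Submodule.orthogonalProjectionOnto W w₀ : ↥W) : H) = w₀ from
        Submodule.starProjection_eq_self_iff.mpr hw₀]
    have hRclosed : IsClosed ((((1 : ↥W →L[ℂ] ↥W) + X).range :
        Submodule ℂ ↥W) : Set ↥W) := by
      rw [hrangeset]
      exact hJc.preimage continuous_subtype_val
    haveI : CompleteSpace ↥(((1 : ↥W →L[ℂ] ↥W) + X).range) :=
      hRclosed.completeSpace_coe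
    apply Submodule.orthogonal_eq_bot_iff.mp
    rw [Submodule.eq_bot_iff]
    intro ξ hξ
    have hall : ∀ u : H, u ∈ W → ⟪u, (ξ : H) + (star U) (ξ : H)⟫_ℂ = 0 := by
      intro u hu
      have h0 : ⟪(((1 + X) ⟨u, hu⟩ : ↥W)), ξ⟫_ℂ = 0 :=
        (Submodule.mem_orthogonal _ ξ).mp hξ _ ⟨⟨u, hu⟩, rfl⟩
      have h0' : ⟪u + ((Submodule.orthogonalProjectionOnto W (U u) : ↥W) : H), (ξ : H)⟫_ℂ = 0 := by
        rw [Submodule.coe_inner] at h0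
        rwa [happly ⟨u, hu⟩] at h0
      have hz : ⟪U u - ((Submodule.orthogonalProjectionOnto W (U u) : ↥W) : H), (ξ : H)⟫_ℂ = 0 :=
        Submodule.inner_left_of_mem_orthogonal ξ.2
          (Submodule.sub_starProjection_mem_orthogonal (U u))
      have hadj : ⟪u, (star U) (ξ : H)⟫_ℂ = ⟪U u, (ξ : H)⟫_ℂ := by
        rw [ContinuousLinearMap.star_eq_adjoint, ContinuousLinearMap.adjoint_inner_right]
      rw [inner_add_right, hadj]
      rw [inner_add_left] at h0'
      rw [inner_sub_left] at hz
      linear_combination h0' + hz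
    have hproj : Submodule.orthogonalProjectionOnto W ((ξ : H) + (star U) (ξ : H)) = 0 :=
      Submodule.orthogonalProjectionOnto_eq_zero_iff.mpr ((Submodule.mem_orthogonal W _).mpr hall)
    exact inj_aux (star U) hUsn W hclUs ξ hproj

theorem symplectic_reduction_main (U : H →L[ℂ] H) (hU : U ∈ unitary (H →L[ℂ] H))
    (hKfd : FiniteDimensional ℂ ↥(LinearMap.ker ((1 + U : H →L[ℂ] H) : H →ₗ[ℂ] H)))
    (hRc : IsClosed ((LinearMap.range ((1 + U : H →L[ℂ] H) : H →ₗ[ℂ] H) : Submodule ℂ H) : Set H))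
    (W : Submodule ℂ H) (hWc : IsClosed (W : Set H)) [Submodule.HasOrthogonalProjection W]
    [FiniteDimensional ℂ ↥(Wᗮ)]
    (hclean : LinearMap.ker ((1 + U : H →L[ℂ] H) : H →ₗ[ℂ] H) ⊓ W = ⊥)
    (Xinv : ↥W →L[ℂ] ↥W)
    (h1 : Xinv ∘L ((1 : ↥W →L[ℂ] ↥W) + (Submodule.orthogonalProjectionOnto W ∘L U ∘L W.subtypeL)) = 1)
    (h2 : ((1 : ↥W →L[ℂ] ↥W) + (Submodule.orthogonalProjectionOnto W ∘L U ∘L W.subtypeL)) ∘L Xinv = 1) :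
    ((Submodule.orthogonalProjectionOnto (Wᗮ) ∘L U ∘L (Wᗮ).subtypeL -
        (Submodule.orthogonalProjectionOnto (Wᗮ) ∘L U ∘L W.subtypeL) ∘L Xinv ∘L
          (Submodule.orthogonalProjectionOnto W ∘L U ∘L (Wᗮ).subtypeL)) ∈
        unitary (↥(Wᗮ) →L[ℂ] ↥(Wᗮ))) := by
  haveI : CompleteSpace ↥W := hWc.completeSpace_coe
  haveI : CompleteSpace ↥(Wᗮ) := W.isClosed_orthogonal.completeSpace_coe
  have hUn : ∀ x : H, ‖U x‖ = ‖x‖ := fun x =>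
    ContinuousLinearMap.norm_map_of_mem_unitary hU x
  have hUsn : ∀ x : H, ‖(star U) x‖ = ‖x‖ := fun x =>
    ContinuousLinearMap.norm_map_of_mem_unitary (Unitary.star_mem hU) x
  set R : ↥(Wᗮ) →L[ℂ] ↥(Wᗮ) := Submodule.orthogonalProjectionOnto (Wᗮ) ∘L U ∘L (Wᗮ).subtypeL -
      (Submodule.orthogonalProjectionOnto (Wᗮ) ∘L U ∘L W.subtypeL) ∘L Xinv ∘L
        (Submodule.orthogonalProjectionOnto W ∘L U ∘L (Wᗮ).subtypeL) with hR
  set R' : ↥(Wᗮ) →L[ℂ] ↥(Wᗮ) := Submodule.orthogonalProjectionOnto (Wᗮ) ∘L (star U) ∘L (Wᗮ).subtypeL -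
      (Submodule.orthogonalProjectionOnto (Wᗮ) ∘L (star U) ∘L W.subtypeL) ∘L
        (ContinuousLinearMap.adjoint Xinv) ∘L
        (Submodule.orthogonalProjectionOnto W ∘L (star U) ∘L (Wᗮ).subtypeL) with hR'
  have hone : ContinuousLinearMap.adjoint (1 : ↥W →L[ℂ] ↥W) = 1 := by
    rw [← ContinuousLinearMap.star_eq_adjoint, star_one]
  have hadjone : ContinuousLinearMap.adjoint (1 : ↥W →L[ℂ] ↥W) = 1 := hone
  have hXadj : ContinuousLinearMap.adjoint
      ((1 : ↥W →L[ℂ] ↥W) + (Submodule.orthogonalProjectionOnto W ∘L U ∘L W.subtypeL)) =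
      (1 : ↥W →L[ℂ] ↥W) + (Submodule.orthogonalProjectionOnto W ∘L (star U) ∘L W.subtypeL) := by
    rw [map_add, hone]
    congr 1
    simp only [ContinuousLinearMap.star_eq_adjoint]
    simp only [ContinuousLinearMap.adjoint_comp, Submodule.adjoint_subtypeL,
      Submodule.adjoint_orthogonalProjection, ContinuousLinearMap.comp_assoc]
  have h2' : ((1 : ↥W →L[ℂ] ↥W) + (Submodule.orthogonalProjectionOnto W ∘L (star U) ∘L W.subtypeL)) ∘L
      (ContinuousLinearMap.adjoint Xinv) = 1 := by
    have h3 := congrArg ContinuousLinearMap.adjoint h1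
    rwa [ContinuousLinearMap.adjoint_comp, hXadj, hone] at h3
  have hadjR : ContinuousLinearMap.adjoint R = R' := by
    rw [hR, hR', map_sub]
    simp only [ContinuousLinearMap.star_eq_adjoint]
    simp only [ContinuousLinearMap.adjoint_comp, Submodule.adjoint_subtypeL,
      Submodule.adjoint_orthogonalProjection, ContinuousLinearMap.comp_assoc]
  have hn1 : ∀ v : ↥(Wᗮ), ‖R v‖ = ‖v‖ := fun v => reduction_norm_map U hUn W Xinv h2 v
  have hn2 : ∀ v : ↥(Wᗮ), ‖R' v‖ = ‖v‖ := fun v =>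
    reduction_norm_map (star U) hUsn W (ContinuousLinearMap.adjoint Xinv) h2' v
  have hu1 : ContinuousLinearMap.adjoint R ∘L R = 1 :=
    (ContinuousLinearMap.norm_map_iff_adjoint_comp_self R).mp hn1
  have hu2 : R ∘L ContinuousLinearMap.adjoint R = 1 := by
    have := (ContinuousLinearMap.norm_map_iff_adjoint_comp_self R').mp hn2
    rw [← hadjR, ContinuousLinearMap.adjoint_adjoint] at this
    exact this
  rw [Unitary.mem_iff]
  constructor
  · rw [ContinuousLinearMap.star_eq_adjoint, ContinuousLinearMap.mul_def]
    exact hu1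
  · rw [ContinuousLinearMap.star_eq_adjoint, ContinuousLinearMap.mul_def]
    exact hu2

lemma ker_reduction_eq (U : H →L[ℂ] H)
    (W : Submodule ℂ H) (hWc : IsClosed (W : Set H)) [Submodule.HasOrthogonalProjection W]
    (Xinv : ↥W →L[ℂ] ↥W)
    (h1 : Xinv ∘L ((1 : ↥W →L[ℂ] ↥W) + (Submodule.orthogonalProjectionOnto W ∘L U ∘L W.subtypeL)) = 1)
    (h2 : ((1 : ↥W →L[ℂ] ↥W) + (Submodule.orthogonalProjectionOnto W ∘L U ∘L W.subtypeL)) ∘L Xinv = 1) :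
    LinearMap.ker
        ((1 + (Submodule.orthogonalProjectionOnto (Wᗮ) ∘L U ∘L (Wᗮ).subtypeL -
          (Submodule.orthogonalProjectionOnto (Wᗮ) ∘L U ∘L W.subtypeL) ∘L Xinv ∘L
            (Submodule.orthogonalProjectionOnto W ∘L U ∘L (Wᗮ).subtypeL)) :
          ↥(Wᗮ) →L[ℂ] ↥(Wᗮ)) : ↥(Wᗮ) →ₗ[ℂ] ↥(Wᗮ)) =
      (LinearMap.ker ((1 + U : H →L[ℂ] H) : H →ₗ[ℂ] H)).map
        (Submodule.orthogonalProjectionOnto (Wᗮ)).toLinearMap := by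
  set P := Submodule.orthogonalProjectionOnto W with hP
  set Q := Submodule.orthogonalProjectionOnto (Wᗮ) with hQ
  set X : ↥W →L[ℂ] ↥W := P ∘L U ∘L W.subtypeL with hX
  set Y : ↥(Wᗮ) →L[ℂ] ↥W := P ∘L U ∘L (Wᗮ).subtypeL with hY
  set Z : ↥W →L[ℂ] ↥(Wᗮ) := Q ∘L U ∘L W.subtypeL with hZ
  set T : ↥(Wᗮ) →L[ℂ] ↥(Wᗮ) := Q ∘L U ∘L (Wᗮ).subtypeL with hT
  have hPa : ∀ a : ↥W, P (a : H) = a := fun a => Submodule.orthogonalProjectionOnto_mem_subspace_eq_self a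
  have hPb : ∀ b : ↥(Wᗮ), P (b : H) = 0 := fun b =>
    Submodule.orthogonalProjectionOnto_apply_of_mem_orthogonal b.2
  have hQa : ∀ a : ↥W, Q (a : H) = 0 := fun a =>
    Submodule.orthogonalProjectionOnto_apply_of_mem_orthogonal
      (W.le_orthogonal_orthogonal a.2)
  have hQb : ∀ b : ↥(Wᗮ), Q (b : H) = b := fun b => Submodule.orthogonalProjectionOnto_mem_subspace_eq_self b
  have hPU : ∀ (a : ↥W) (b : ↥(Wᗮ)), P (U ((a : H) + (b : H))) = X a + Y b := by
    intro a b
    rw [map_add, map_add]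
    simp [hX, hY, ContinuousLinearMap.comp_apply]
  have hQU : ∀ (a : ↥W) (b : ↥(Wᗮ)), Q (U ((a : H) + (b : H))) = Z a + T b := by
    intro a b
    rw [map_add, map_add]
    simp [hZ, hT, ContinuousLinearMap.comp_apply]
  have hdec : ∀ z : H, ((P z : ↥W) : H) + ((Q z : ↥(Wᗮ)) : H) = z := fun z =>
    Submodule.starProjection_add_starProjection_orthogonal (K := W) z
  have happR : ∀ u : ↥(Wᗮ), ((1 + (T - Z ∘L Xinv ∘L Y)) : ↥(Wᗮ) →L[ℂ] ↥(Wᗮ)) u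
      = u + T u + Z (-(Xinv (Y u))) := by
    intro u
    simp only [ContinuousLinearMap.add_apply, ContinuousLinearMap.sub_apply,
      ContinuousLinearMap.one_apply, ContinuousLinearMap.comp_apply, map_neg]
    abel
  ext v
  rw [LinearMap.mem_ker, Submodule.mem_map]
  constructor
  · intro hv
    have hv' : ((1 + (T - Z ∘L Xinv ∘L Y)) : ↥(Wᗮ) →L[ℂ] ↥(Wᗮ)) v = 0 := hv
    set w : ↥W := -(Xinv (Y v)) with hw
    have hthis : Xinv (Y v) + X (Xinv (Y v)) = Y v := by
      have := congrArg (fun (f : ↥W →L[ℂ] ↥W) => f (Y v)) h2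
      simpa [ContinuousLinearMap.comp_apply, ContinuousLinearMap.add_apply] using this
    have hkey1 : X w + Y v = -w := by
      rw [hw, map_neg, neg_neg]
      have h3 : X (Xinv (Y v)) = Y v - Xinv (Y v) := eq_sub_of_add_eq' hthis
      rw [h3]; abel
    have h0 : v + T v + Z w = 0 := by rw [hw, ← happR v]; exact hv'
    have hkey2 : Z w + T v = -v := by
      have h0' : v + (Z w + T v) = 0 := by rw [← h0]; abel
      exact eq_neg_of_add_eq_zero_right h0'
    set x : H := (w : H) + (v : H) with hx
    have hUx : U x = ((X w + Y v : ↥W) : H) + ((Z w + T v : ↥(Wᗮ)) : H) := by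
      rw [← hdec (U x), hx, hPU w v, hQU w v]
    refine ⟨x, ?_, ?_⟩
    · rw [LinearMap.mem_ker]
      have h5 : ((1 + U : H →L[ℂ] H) : H →ₗ[ℂ] H) x = x + U x := by
        simp [ContinuousLinearMap.add_apply]
      rw [h5, hUx, hkey1, hkey2, hx]
      push_cast
      abel
    · show Q x = v
      rw [hx, map_add, hQa w, hQb v, zero_add]
  · rintro ⟨x, hx, rfl⟩
    show ((1 + (T - Z ∘L Xinv ∘L Y)) : ↥(Wᗮ) →L[ℂ] ↥(Wᗮ)) (Q x) = 0
    set w : ↥W := P x with hw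
    set v : ↥(Wᗮ) := Q x with hv
    have hxd : x = (w : H) + (v : H) := (hdec x).symm
    have hAx : x + U x = 0 := by
      have := LinearMap.mem_ker.mp hx
      simpa [ContinuousLinearMap.add_apply] using this
    have hUx2 : U x = U ((w : H) + (v : H)) := by rw [← hxd]
    have h9 : P (U x) = X w + Y v := by rw [hUx2]; exact hPU w v
    have h10 : Q (U x) = Z w + T v := by rw [hUx2]; exact hQU w v
    have h8 : P x + P (U x) = 0 := by rw [← map_add, hAx, map_zero]
    have h8' : Q x + Q (U x) = 0 := by rw [← map_add, hAx, map_zero]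
    have hPAx : w + (X w + Y v) = 0 := by rw [← h9, hw]; exact h8
    have hQAx : v + (Z w + T v) = 0 := by rw [← h10, hv]; exact h8'
    have hwv : w = -(Xinv (Y v)) := by
      have h5 : ((1 : ↥W →L[ℂ] ↥W) + X) w = -(Y v) := by
        simp only [ContinuousLinearMap.add_apply, ContinuousLinearMap.one_apply]
        have h11 : w + X w + Y v = 0 := by rw [← hPAx]; abel
        have h12 : w + X w = -(Y v) + (w + X w + Y v) := by abel
        rw [h11, add_zero] at h12
        exact h12
      have h7 : Xinv (((1 : ↥W →L[ℂ] ↥W) + X) w) = w := by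
        have := congrArg (fun (f : ↥W →L[ℂ] ↥W) => f w) h1
        simpa [ContinuousLinearMap.comp_apply] using this
      rw [h5, map_neg] at h7
      rw [← h7]
    rw [happR v, ← hwv]
    have h13 : v + (Z w + T v) = v + T v + Z w := by abel
    rw [h13] at hQAx
    exact hQAx

lemma finrank_map_Q (U : H →L[ℂ] H)
    (W : Submodule ℂ H) [Submodule.HasOrthogonalProjection W]
    (hclean : LinearMap.ker ((1 + U : H →L[ℂ] H) : H →ₗ[ℂ] H) ⊓ W = ⊥) :
    Module.finrank ℂ
        ↥((LinearMap.ker ((1 + U : H →L[ℂ] H) : H →ₗ[ℂ] H)).map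
          (Submodule.orthogonalProjectionOnto (Wᗮ)).toLinearMap) =
      Module.finrank ℂ ↥(LinearMap.ker ((1 + U : H →L[ℂ] H) : H →ₗ[ℂ] H)) := by
  set K : Submodule ℂ H := LinearMap.ker ((1 + U : H →L[ℂ] H) : H →ₗ[ℂ] H) with hK
  set f : ↥K →ₗ[ℂ] ↥(Wᗮ) := (Submodule.orthogonalProjectionOnto (Wᗮ)).toLinearMap.comp K.subtype with hf
  have hinj : Function.Injective f := by
    rw [← LinearMap.ker_eq_bot, Submodule.eq_bot_iff]
    intro x hx
    have hx0 : Submodule.orthogonalProjectionOnto (Wᗮ) (x : H) = 0 := LinearMap.mem_ker.mp hx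
    have hxW : (x : H) ∈ W := by
      have := Submodule.orthogonalProjectionOnto_eq_zero_iff.mp hx0
      rwa [Submodule.orthogonal_orthogonal] at this
    have : (x : H) ∈ (⊥ : Submodule ℂ H) := hclean ▸ Submodule.mem_inf.mpr ⟨x.2, hxW⟩
    exact Subtype.ext (by simpa using this)
  have hrange : LinearMap.range f = K.map (Submodule.orthogonalProjectionOnto (Wᗮ)).toLinearMap := by
    rw [hf, LinearMap.range_comp, Submodule.range_subtype]
  have e := LinearEquiv.ofInjective f hinj
  rw [hrange] at e
  exact (LinearEquiv.finrank_eq e).symm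

theorem symplectic_reduction_of_unitary' (U : H →L[ℂ] H) (hU : U ∈ unitary (H →L[ℂ] H))
    (hKfd : FiniteDimensional ℂ ↥(LinearMap.ker ((1 + U : H →L[ℂ] H) : H →ₗ[ℂ] H)))
    (hRc : IsClosed ((LinearMap.range ((1 + U : H →L[ℂ] H) : H →ₗ[ℂ] H) : Submodule ℂ H) : Set H))
    (W : Submodule ℂ H) (hWc : IsClosed (W : Set H)) [Submodule.HasOrthogonalProjection W]
    [FiniteDimensional ℂ ↥(Wᗮ)]
    (hclean : LinearMap.ker ((1 + U : H →L[ℂ] H) : H →ₗ[ℂ] H) ⊓ W = ⊥) :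
    IsUnit ((1 : ↥W →L[ℂ] ↥W) + (Submodule.orthogonalProjectionOnto W ∘L U ∘L W.subtypeL)) := by
  haveI : CompleteSpace ↥W := hWc.completeSpace_coe
  obtain ⟨hker, hrange⟩ := isUnit_one_add_X U hU hKfd hRc W hWc hclean
  set e := ContinuousLinearEquiv.ofBijective _ hker hrange with he
  refine ⟨⟨(1 : ↥W →L[ℂ] ↥W) + (Submodule.orthogonalProjectionOnto W ∘L U ∘L W.subtypeL),
    (e.symm : ↥W →L[ℂ] ↥W), ?_, ?_⟩, rfl⟩
  · ext x
    have h1 : ((1 : ↥W →L[ℂ] ↥W) + (Submodule.orthogonalProjectionOnto W ∘L U ∘L W.subtypeL))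
        ((e.symm : ↥W →L[ℂ] ↥W) x) = e (e.symm x) := by
      rw [he, ContinuousLinearEquiv.coeFn_ofBijective]
      rfl
    simp only [ContinuousLinearMap.mul_apply, ContinuousLinearMap.one_apply]
    rw [h1, e.apply_symm_apply]
  · ext x
    simp only [ContinuousLinearMap.mul_apply, ContinuousLinearMap.one_apply]
    exact congrArg Subtype.val
      (ContinuousLinearEquiv.ofBijective_symm_apply_apply _ hker hrange x)

end Aux

/-- let `U` be unitary with `1 + U` Fredholm and `W` a closed
finite-codimensional subspace with `Ker(1+U) ∩ W = 0`.  Writing `U = [[X,Y],[Z,T]]`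
relative to `H = W ⊕ W⊥`, the operator `1 + X` on `W` is invertible, the symplectic
reduction `ℛ(U) = T - Z (1+X)⁻¹ Y` is unitary on `W⊥`, and
`Ker (1 + ℛ(U)) = P_{W⊥}(Ker (1+U))`; in particular the kernels have equal dimension. -/
theorem symplectic_reduction_of_unitary (U : H →L[ℂ] H) (hU : U ∈ unitary (H →L[ℂ] H))
    (hFred : IsFredholmOp H (1 + U))
    (W : Submodule ℂ H) (hWc : IsClosed (W : Set H)) [Submodule.HasOrthogonalProjection W]
    [FiniteDimensional ℂ ↥(Wᗮ)]
    (hclean : LinearMap.ker ((1 + U : H →L[ℂ] H) : H →ₗ[ℂ] H) ⊓ W = ⊥) :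
    IsUnit ((1 : ↥W →L[ℂ] ↥W) + (Submodule.orthogonalProjectionOnto W ∘L U ∘L W.subtypeL)) ∧
    ∀ Xinv : ↥W →L[ℂ] ↥W,
      Xinv ∘L ((1 : ↥W →L[ℂ] ↥W) + (Submodule.orthogonalProjectionOnto W ∘L U ∘L W.subtypeL)) = 1 →
      ((1 : ↥W →L[ℂ] ↥W) + (Submodule.orthogonalProjectionOnto W ∘L U ∘L W.subtypeL)) ∘L Xinv = 1 →
      ((Submodule.orthogonalProjectionOnto (Wᗮ) ∘L U ∘L (Wᗮ).subtypeL -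
          (Submodule.orthogonalProjectionOnto (Wᗮ) ∘L U ∘L W.subtypeL) ∘L Xinv ∘L
            (Submodule.orthogonalProjectionOnto W ∘L U ∘L (Wᗮ).subtypeL)) ∈
          unitary (↥(Wᗮ) →L[ℂ] ↥(Wᗮ))) ∧
      LinearMap.ker
          ((1 + (Submodule.orthogonalProjectionOnto (Wᗮ) ∘L U ∘L (Wᗮ).subtypeL -
            (Submodule.orthogonalProjectionOnto (Wᗮ) ∘L U ∘L W.subtypeL) ∘L Xinv ∘L
              (Submodule.orthogonalProjectionOnto W ∘L U ∘L (Wᗮ).subtypeL)) :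
            ↥(Wᗮ) →L[ℂ] ↥(Wᗮ)) : ↥(Wᗮ) →ₗ[ℂ] ↥(Wᗮ)) =
        (LinearMap.ker ((1 + U : H →L[ℂ] H) : H →ₗ[ℂ] H)).map
          (Submodule.orthogonalProjectionOnto (Wᗮ)).toLinearMap ∧
      Module.finrank ℂ
          ↥(LinearMap.ker
            ((1 + (Submodule.orthogonalProjectionOnto (Wᗮ) ∘L U ∘L (Wᗮ).subtypeL -
              (Submodule.orthogonalProjectionOnto (Wᗮ) ∘L U ∘L W.subtypeL) ∘L Xinv ∘L
                (Submodule.orthogonalProjectionOnto W ∘L U ∘L (Wᗮ).subtypeL)) :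
              ↥(Wᗮ) →L[ℂ] ↥(Wᗮ)) : ↥(Wᗮ) →ₗ[ℂ] ↥(Wᗮ))) =
        Module.finrank ℂ ↥(LinearMap.ker ((1 + U : H →L[ℂ] H) : H →ₗ[ℂ] H)) := by
  obtain ⟨hKfd, _hcoker, hRc⟩ := hFred
  refine ⟨symplectic_reduction_of_unitary' U hU hKfd hRc W hWc hclean, fun Xinv h1 h2 => ?_⟩
  refine ⟨symplectic_reduction_main U hU hKfd hRc W hWc hclean Xinv h1 h2, ?_, ?_⟩
  · exact ker_reduction_eq U W hWc Xinv h1 h2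
  · rw [ker_reduction_eq U W hWc Xinv h1 h2]
    exact finrank_map_Q U W hclean
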